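/- (Frontier localization, step S^b ⊆ S¹ in the proof of Theorem 5.) Assume the avoidance hypothesis. Then the topological frontier of the remainder set S = {g(u) : u ∈ ℝ², ‖u‖ ≤ 1} is contained in {g(u) : u ∈ ℝ², ‖u‖ = 1 or (‖u‖ ≤ 1 and c·u₁ + d·u₂ = 0)}. -/

import Mathlib

noncomputable section

/-- Matrix–vector multiplication, viewed as a map on the Euclidean plane. -/
def mv (M : Matrix (Fin 2) (Fin 2) ℝ) (u : EuclideanSpace ℝ (Fin 2)) :
    EuclideanSpace ℝ (Fin 2) := WithLp.toLp 2 (M.mulVec u)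

/-- Range `r(p) = √((p₁−a)² + (p₂−b)²)` to the sensor located at `(a, b)`. -/
def rr (a b : ℝ) (p : EuclideanSpace ℝ (Fin 2)) : ℝ :=
  Real.sqrt ((p 0 - a) ^ 2 + (p 1 - b) ^ 2)

/-- Bearing `θ(p)`: polar angle in `(−π, π]` of the complex number `(p₁−a) + i(p₂−b)`. -/
def theta (a b : ℝ) (p : EuclideanSpace ℝ (Fin 2)) : ℝ :=
  Complex.arg ⟨p 0 - a, p 1 - b⟩

/-- Jacobian matrix of the range–bearing measurement map at `p`. -/
def Jh (a b : ℝ) (p : EuclideanSpace ℝ (Fin 2)) : Matrix (Fin 2) (Fin 2) ℝ :=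
  !![(p 0 - a) / rr a b p, (p 1 - b) / rr a b p;
     -(p 1 - b) / (rr a b p) ^ 2, (p 0 - a) / (rr a b p) ^ 2]

/-- The range–bearing measurement map `h(p) = (r(p), θ(p))`. -/
def hMeas (a b : ℝ) (p : EuclideanSpace ℝ (Fin 2)) : EuclideanSpace ℝ (Fin 2) :=
  WithLp.toLp 2 ![rr a b p, theta a b p]

/-- The linearization remainder `g(u) = h(x + Eu) − h(x) − J_h(x)·(Eu)`. -/
def gRem (a b : ℝ) (x : EuclideanSpace ℝ (Fin 2)) (E : Matrix (Fin 2) (Fin 2) ℝ)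
    (u : EuclideanSpace ℝ (Fin 2)) : EuclideanSpace ℝ (Fin 2) :=
  hMeas a b (x + mv E u) - hMeas a b x - mv (Jh a b x) (mv E u)

abbrev V2 := EuclideanSpace ℝ (Fin 2)

def mvL (M : Matrix (Fin 2) (Fin 2) ℝ) : V2 →L[ℝ] V2 :=
  LinearMap.toContinuousLinearMap <|
    ((WithLp.linearEquiv 2 ℝ (Fin 2 → ℝ)).symm.toLinearMap) ∘ₗ M.mulVecLin ∘ₗ
      (WithLp.linearEquiv 2 ℝ (Fin 2 → ℝ)).toLinearMap

lemma mvL_apply (M : Matrix (Fin 2) (Fin 2) ℝ) (u : V2) : mvL M u = WithLp.toLp 2 (M.mulVec u) := rfl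


-- basic positivity
lemma s_pos {a b : ℝ} {p : V2} (hp : ¬(p 0 ≤ a ∧ p 1 = b)) :
    0 < (p 0 - a) ^ 2 + (p 1 - b) ^ 2 := by
  push_neg at hp
  rcases le_or_gt (p 0) a with h | h
  · have := hp h
    nlinarith [sq_nonneg (p 0 - a), sq_nonneg (p 1 - b), sq_pos_of_ne_zero (sub_ne_zero.2 this)]
  · nlinarith [sq_nonneg (p 1 - b)]

lemma rr_pos {a b : ℝ} {p : V2} (hp : ¬(p 0 ≤ a ∧ p 1 = b)) : 0 < rr a b p :=
  Real.sqrt_pos.2 (s_pos hp)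

lemma rr_sq {a b : ℝ} (p : V2) : rr a b p ^ 2 = (p 0 - a) ^ 2 + (p 1 - b) ^ 2 := by
  rw [rr, Real.sq_sqrt]; positivity

lemma mem_slit {a b : ℝ} {p : V2} (hp : ¬(p 0 ≤ a ∧ p 1 = b)) :
    (⟨p 0 - a, p 1 - b⟩ : ℂ) ∈ Complex.slitPlane := by
  rw [Complex.mem_slitPlane_iff]
  push_neg at hp
  rcases le_or_gt (p 0) a with h | h
  · exact Or.inr (sub_ne_zero.2 (hp h))
  · exact Or.inl (by simpa using h)

def ee0 : V2 := WithLp.toLp 2 ![1, 0]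
def ee1 : V2 := WithLp.toLp 2 ![0, 1]

lemma hasStrictFDerivAt_hMeas (a b : ℝ) (p : V2) (hp : ¬(p 0 ≤ a ∧ p 1 = b)) :
    HasStrictFDerivAt (hMeas a b) (mvL (Jh a b p)) p := by
  have hs := s_pos hp
  have hr := rr_pos hp
  set r := rr a b p with hrdef
  -- projections
  have h0 : HasStrictFDerivAt (fun q : V2 => q 0 - a) (EuclideanSpace.proj (0 : Fin 2) : V2 →L[ℝ] ℝ) p := by
    exact ((EuclideanSpace.proj (0 : Fin 2) : V2 →L[ℝ] ℝ).hasStrictFDerivAt (x := p)).sub_const a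
  have h1 : HasStrictFDerivAt (fun q : V2 => q 1 - b) (EuclideanSpace.proj (1 : Fin 2) : V2 →L[ℝ] ℝ) p := by
    exact ((EuclideanSpace.proj (1 : Fin 2) : V2 →L[ℝ] ℝ).hasStrictFDerivAt (x := p)).sub_const b
  -- the squared distance
  have hsq : HasStrictFDerivAt (fun q : V2 => (q 0 - a) ^ 2 + (q 1 - b) ^ 2)
      (((2 * (p 0 - a)) • (EuclideanSpace.proj (0 : Fin 2) : V2 →L[ℝ] ℝ))
        + ((2 * (p 1 - b)) • (EuclideanSpace.proj (1 : Fin 2) : V2 →L[ℝ] ℝ))) p := by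
    simp only [pow_two]
    refine ((h0.mul h0).add (h1.mul h1)).congr_fderiv ?_
    module
  -- rr
  have hrr : HasStrictFDerivAt (rr a b)
      ((1 / (2 * r)) • (((2 * (p 0 - a)) • (EuclideanSpace.proj (0 : Fin 2) : V2 →L[ℝ] ℝ))
        + ((2 * (p 1 - b)) • (EuclideanSpace.proj (1 : Fin 2) : V2 →L[ℝ] ℝ)))) p := by
    exact (Real.hasStrictDerivAt_sqrt hs.ne').comp_hasStrictFDerivAt p hsq
  -- theta
  have hzslit := mem_slit hp
  have hφ : HasStrictFDerivAt (fun q : V2 => (⟨q 0 - a, q 1 - b⟩ : ℂ))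
      ((Complex.ofRealCLM.comp (EuclideanSpace.proj (0 : Fin 2) : V2 →L[ℝ] ℝ)) +
        ((Complex.ofRealCLM.comp (EuclideanSpace.proj (1 : Fin 2) : V2 →L[ℝ] ℝ)).smulRight
          Complex.I)) p := by
    have hA := Complex.ofRealCLM.hasStrictFDerivAt.comp p h0
    have hB := (Complex.ofRealCLM.hasStrictFDerivAt.comp p h1).mul_const Complex.I
    have := hA.add hB
    simp only [Complex.mk_eq_add_mul_I]
    refine this.congr_fderiv ?_
    ext w
    simp [ContinuousLinearMap.smulRight_apply, smul_eq_mul]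
    ring
  have hlog := (((Complex.hasStrictDerivAt_log hzslit).hasStrictFDerivAt).restrictScalars ℝ).comp
      p hφ
  have hth := Complex.imCLM.hasStrictFDerivAt.comp p hlog
  have hth' : HasStrictFDerivAt (theta a b) (Complex.imCLM.comp
      ((((ContinuousLinearMap.smulRight (1 : ℂ →L[ℂ] ℂ)
        (⟨p 0 - a, p 1 - b⟩ : ℂ)⁻¹).restrictScalars ℝ)).comp
        ((Complex.ofRealCLM.comp (EuclideanSpace.proj (0 : Fin 2) : V2 →L[ℝ] ℝ)) +
          ((Complex.ofRealCLM.comp (EuclideanSpace.proj (1 : Fin 2) : V2 →L[ℝ] ℝ)).smulRight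
            Complex.I)))) p := by
    have hfun : theta a b = fun q : V2 => (Complex.log ⟨q 0 - a, q 1 - b⟩).im := by
      funext q; rw [theta, Complex.log_im]
    rw [hfun]
    exact hth
  -- assemble
  have hfun : hMeas a b = fun q => rr a b q • ee0 + theta a b q • ee1 := by
    funext q; ext i
    fin_cases i <;> simp [hMeas, ee0, ee1]
  have hcomb := ((ContinuousLinearMap.toSpanSingleton ℝ ee0).hasStrictFDerivAt.comp
      p hrr).add
      ((ContinuousLinearMap.toSpanSingleton ℝ ee1).hasStrictFDerivAt.comp p hth')
  rw [hfun]
  refine hcomb.congr_fderiv ?_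
  refine ContinuousLinearMap.ext fun w => PiLp.ext fun i => ?_
  have hr2 : r ^ 2 = (p 0 - a) ^ 2 + (p 1 - b) ^ 2 := rr_sq p
  fin_cases i <;>
    simp [mvL_apply, Jh, Matrix.mulVec, dotProduct, Fin.sum_univ_two,
      ContinuousLinearMap.toSpanSingleton_apply, Complex.mul_im, Complex.inv_re,
      Complex.inv_im, Complex.normSq_mk, smul_eq_mul, ee0, ee1]
  · rw [← hrdef]
    field_simp
  · rw [rr_sq]
    have hn : (p 0 - a) * (p 0 - a) + (p 1 - b) * (p 1 - b) ≠ 0 := by nlinarith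
    field_simp [hs.ne', hn]



lemma hasStrictFDerivAt_gRem (a b : ℝ) (x : V2) (E : Matrix (Fin 2) (Fin 2) ℝ) (u : V2)
    (hpu : ¬((x + mv E u) 0 ≤ a ∧ (x + mv E u) 1 = b)) :
    HasStrictFDerivAt (gRem a b x E)
      (mvL ((Jh a b (x + mv E u) - Jh a b x) * E)) u := by
  have haff : HasStrictFDerivAt (fun v : V2 => x + mv E v) (mvL E) u :=
    (mvL E).hasStrictFDerivAt.const_add x
  have h1 := (hasStrictFDerivAt_hMeas a b _ hpu).comp u haff
  have h2 : HasStrictFDerivAt (fun v : V2 => mv (Jh a b x) (mv E v))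
      ((mvL (Jh a b x)).comp (mvL E)) u :=
    ((mvL (Jh a b x)).comp (mvL E)).hasStrictFDerivAt
  have h3 := (h1.sub_const (hMeas a b x)).sub h2
  refine h3.congr_fderiv ?_
  refine ContinuousLinearMap.ext fun w => ?_
  simp only [ContinuousLinearMap.sub_apply, ContinuousLinearMap.comp_apply, mvL_apply, WithLp.ofLp_toLp]
  rw [Matrix.mulVec_mulVec, Matrix.mulVec_mulVec, ← WithLp.toLp_sub, ← Matrix.sub_mulVec, Matrix.sub_mul]



lemma aux_det_ne (P Q X Y r R : ℝ) (hr : 0 < r) (hR : 0 < R)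
    (hr2 : r ^ 2 = P ^ 2 + Q ^ 2) (hR2 : R ^ 2 = X ^ 2 + Y ^ 2)
    (hcr : Y * P - X * Q ≠ 0) :
    (P / r - X / R) * (P / r ^ 2 - X / R ^ 2) -
      (Q / r - Y / R) * (-Q / r ^ 2 - -Y / R ^ 2) ≠ 0 := by
  have hpq : (P / r) ^ 2 + (Q / r) ^ 2 = 1 := by
    field_simp
    linarith
  have hxy : (X / R) ^ 2 + (Y / R) ^ 2 = 1 := by
    field_simp
    linarith
  have hne : (P / r) * (Y / R) - (Q / r) * (X / R) ≠ 0 := by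
    have h' : P * Y - Q * X ≠ 0 := fun h => hcr (by linarith)
    rw [show (P / r) * (Y / R) - (Q / r) * (X / R) = (P * Y - Q * X) / (r * R) by ring]
    exact div_ne_zero h' (mul_pos hr hR).ne'
  have hCS : ((P / r) * (X / R) + (Q / r) * (Y / R)) ^ 2 +
      ((P / r) * (Y / R) - (Q / r) * (X / R)) ^ 2 = 1 := by
    linear_combination ((X / R) ^ 2 + (Y / R) ^ 2) * hpq + hxy
  have h1C : 0 < 1 - ((P / r) * (X / R) + (Q / r) * (Y / R)) := by
    nlinarith [sq_pos_of_ne_zero hne, sq_nonneg ((P / r) * (X / R) + (Q / r) * (Y / R) - 1),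
      sq_nonneg ((P / r) * (X / R) + (Q / r) * (Y / R) + 1)]
  have e2 : (P / r - X / R) * (P / r ^ 2 - X / R ^ 2) -
      (Q / r - Y / R) * (-Q / r ^ 2 - -Y / R ^ 2) =
      (1 / r) * (1 - ((P / r) * (X / R) + (Q / r) * (Y / R))) +
        (1 / R) * (1 - ((P / r) * (X / R) + (Q / r) * (Y / R))) := by
    linear_combination (1 / r) * hpq + (1 / R) * hxy
  rw [e2]
  have := add_pos (mul_pos (by positivity : (0:ℝ) < 1 / r) h1C)
    (mul_pos (by positivity : (0:ℝ) < 1 / R) h1C)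
  exact this.ne'

lemma det_sub_ne_zero (a b : ℝ) (x : V2) (E : Matrix (Fin 2) (Fin 2) ℝ) (u : V2)
    (hpu : ¬((x + mv E u) 0 ≤ a ∧ (x + mv E u) 1 = b))
    (hx : ¬(x 0 ≤ a ∧ x 1 = b))
    (hcross : (x 1 - b) * mv E u 0 - (x 0 - a) * mv E u 1 ≠ 0) :
    (Jh a b (x + mv E u) - Jh a b x).det ≠ 0 := by
  set p : V2 := x + mv E u with hpdef
  have hr : 0 < rr a b p := rr_pos hpu
  have hR : 0 < rr a b x := rr_pos hx
  set r := rr a b p with hrdef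
  set R := rr a b x with hRdef
  have hr2 : r ^ 2 = (p 0 - a) ^ 2 + (p 1 - b) ^ 2 := rr_sq p
  have hR2 : R ^ 2 = (x 0 - a) ^ 2 + (x 1 - b) ^ 2 := rr_sq x
  set P := p 0 - a with hP
  set Q := p 1 - b with hQ
  set X := x 0 - a with hX
  set Y := x 1 - b with hY
  have hPX : P = X + mv E u 0 := by
    simp [hP, hX, hpdef, mv]
    ring
  have hQY : Q = Y + mv E u 1 := by
    simp [hQ, hY, hpdef, mv]
    ring
  have hcr : Y * P - X * Q ≠ 0 := by
    rw [hPX, hQY]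
    intro h
    apply hcross
    linarith [h]
  have h00 : (Jh a b p - Jh a b x) 0 0 = P / r - X / R := by
    simp [Jh, Matrix.sub_apply]
    rfl
  have h01 : (Jh a b p - Jh a b x) 0 1 = Q / r - Y / R := by
    simp [Jh, Matrix.sub_apply]
    rfl
  have h10 : (Jh a b p - Jh a b x) 1 0 = -Q / r ^ 2 - -Y / R ^ 2 := by
    simp [Jh, Matrix.sub_apply]
    rw [← hrdef, ← hRdef, hQ, hY]
    ring
  have h11 : (Jh a b p - Jh a b x) 1 1 = P / r ^ 2 - X / R ^ 2 := by
    simp [Jh, Matrix.sub_apply]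
    rfl
  rw [Matrix.det_fin_two, h00, h01, h10, h11]
  exact aux_det_ne P Q X Y r R hr hR hr2 hR2 hcr

def matEquiv (M : Matrix (Fin 2) (Fin 2) ℝ) (h : IsUnit M.det) : V2 ≃L[ℝ] V2 :=
{ (mvL M).toLinearMap with
  invFun := mvL M⁻¹
  left_inv := fun u => by
    show mvL M⁻¹ (mvL M u) = u
    rw [mvL_apply, mvL_apply, WithLp.ofLp_toLp, Matrix.mulVec_mulVec, Matrix.nonsing_inv_mul M h,
      Matrix.one_mulVec, WithLp.toLp_ofLp]
  right_inv := fun u => by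
    show mvL M (mvL M⁻¹ u) = u
    rw [mvL_apply, mvL_apply, WithLp.ofLp_toLp, Matrix.mulVec_mulVec, Matrix.mul_nonsing_inv M h,
      Matrix.one_mulVec, WithLp.toLp_ofLp]
  continuous_toFun := (mvL M).continuous
  continuous_invFun := (mvL M⁻¹).continuous }

lemma matEquiv_coe (M : Matrix (Fin 2) (Fin 2) ℝ) (h : IsUnit M.det) :
    (matEquiv M h : V2 →L[ℝ] V2) = mvL M := rfl


/-- **Frontier localization.** Under the avoidance hypothesis, the frontier of the
remainder set is contained in the image of `{‖u‖ = 1} ∪ {‖u‖ ≤ 1, c·u₁ + d·u₂ = 0}`. -/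
theorem frontier_remainder_subset
    (a b : ℝ) (x : EuclideanSpace ℝ (Fin 2)) (E : Matrix (Fin 2) (Fin 2) ℝ)
    (hE : 0 < E.det)
    (havoid : ∀ u : EuclideanSpace ℝ (Fin 2), ‖u‖ ≤ 1 →
      ¬((x + mv E u) 0 ≤ a ∧ (x + mv E u) 1 = b))
    (c d : ℝ)
    (hc : c = E 0 0 * (x 1 - b) - E 1 0 * (x 0 - a))
    (hd : d = E 0 1 * (x 1 - b) - E 1 1 * (x 0 - a)) :
    frontier {y : EuclideanSpace ℝ (Fin 2) |
        ∃ u : EuclideanSpace ℝ (Fin 2), ‖u‖ ≤ 1 ∧ gRem a b x E u = y} ⊆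
      {y : EuclideanSpace ℝ (Fin 2) | ∃ u : EuclideanSpace ℝ (Fin 2),
        (‖u‖ = 1 ∨ (‖u‖ ≤ 1 ∧ c * u 0 + d * u 1 = 0)) ∧ gRem a b x E u = y} := by
  set S : Set V2 := {y | ∃ u : V2, ‖u‖ ≤ 1 ∧ gRem a b x E u = y} with hS
  have hx0 : ¬(x 0 ≤ a ∧ x 1 = b) := by
    have := havoid 0 (by simp)
    simpa [mv, Matrix.mulVec_zero] using this
  have hSimg : S = gRem a b x E '' Metric.closedBall 0 1 := by
    ext y
    constructor
    · rintro ⟨u, h1, h2⟩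
      exact ⟨u, mem_closedBall_zero_iff.2 h1, h2⟩
    · rintro ⟨u, h1, h2⟩
      exact ⟨u, mem_closedBall_zero_iff.1 h1, h2⟩
  have hclosed : IsClosed S := by
    rw [hSimg]
    refine ((isCompact_closedBall (0 : V2) 1).image_of_continuousOn ?_).isClosed
    intro u hu
    exact ((hasStrictFDerivAt_gRem a b x E u
      (havoid u (mem_closedBall_zero_iff.1 hu))).continuousAt).continuousWithinAt
  intro y hy
  obtain ⟨u, hu, hgu⟩ : y ∈ S := hclosed.frontier_subset hy
  by_cases h1 : ‖u‖ = 1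
  · exact ⟨u, Or.inl h1, hgu⟩
  by_cases h2 : c * u 0 + d * u 1 = 0
  · exact ⟨u, Or.inr ⟨hu, h2⟩, hgu⟩
  exfalso
  have hlt : ‖u‖ < 1 := lt_of_le_of_ne hu h1
  have hcross : (x 1 - b) * mv E u 0 - (x 0 - a) * mv E u 1 ≠ 0 := by
    intro h
    apply h2
    have e0 : mv E u 0 = E 0 0 * u 0 + E 0 1 * u 1 := by
      simp [mv, Matrix.mulVec, dotProduct, Fin.sum_univ_two]
    have e1 : mv E u 1 = E 1 0 * u 0 + E 1 1 * u 1 := by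
      simp [mv, Matrix.mulVec, dotProduct, Fin.sum_univ_two]
    rw [e0, e1] at h
    rw [hc, hd]
    linear_combination h
  have hdetJ := det_sub_ne_zero a b x E u (havoid u hu) hx0 hcross
  have hMdet : IsUnit ((Jh a b (x + mv E u) - Jh a b x) * E).det := by
    rw [Matrix.det_mul]
    exact (mul_ne_zero hdetJ hE.ne').isUnit
  have hg := hasStrictFDerivAt_gRem a b x E u (havoid u hu)
  have hg' : HasStrictFDerivAt (gRem a b x E)
      ((matEquiv _ hMdet : V2 ≃L[ℝ] V2) : V2 →L[ℝ] V2) u :=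
    hg.congr_fderiv (matEquiv_coe _ hMdet).symm
  have hmap := hg'.map_nhds_eq_of_equiv
  rw [hgu] at hmap
  have hnh : S ∈ nhds y := by
    rw [← hmap]
    refine Filter.mem_map.2 (Filter.mem_of_superset
      ((Metric.isOpen_ball).mem_nhds (mem_ball_zero_iff.2 hlt)) ?_)
    intro v hv
    exact ⟨v, le_of_lt (mem_ball_zero_iff.1 hv), rfl⟩
  exact hy.2 (mem_interior_iff_mem_nhds.2 hnh)
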